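/- Let X = (x_1,…,x_N) and Y = (y_1,…,y_N) be vectors with each x_k = Σ_{i=0}^{B_x-1} a_{ik} 2^{i}/2^{B_x}, y_k = Σ_{j=0}^{B_y-1} c_{jk} 2^{j}/2^{B_y}, a_{ik}, c_{jk} ∈ {+1,-1}. Define X̄ ⊗ Ȳ = Σ_{k=1}^{N} Σ_{i,j} (σ(a_{ik}) ⊕ σ(c_{jk})) 2^{i+j}. Then the inner product satisfies ⟨X, Y⟩ = (1/2^{B_x+B_y}) · (N(2^{B_x}-1)(2^{B_y}-1) - 2(X̄ ⊗ Ȳ)). -/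

import Mathlib

/-- Inner product of XFBQ-representable vectors: with x_k, y_k given by signed
binary digits a_{ik}, c_{jk} ∈ {+1,-1}, σ(t) = (1-t)/2, ⊕ the XOR on {0,1},
and X̄ ⊗ Ȳ = Σ_k Σ_{i,j} (σ(a_{ik}) ⊕ σ(c_{jk})) 2^{i+j}, one has
⟨X,Y⟩ = (1/2^{B_x+B_y}) (N(2^{B_x}-1)(2^{B_y}-1) - 2 (X̄ ⊗ Ȳ)). -/
theorem stmt_8 (N Bx By : ℕ) (hBx : 0 < Bx) (hBy : 0 < By)
    (a c : ℕ → ℕ → ℝ)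
    (ha : ∀ i < Bx, ∀ k < N, a i k = 1 ∨ a i k = -1)
    (hc : ∀ j < By, ∀ k < N, c j k = 1 ∨ c j k = -1)
    (x y : ℕ → ℝ)
    (hx : ∀ k < N, x k = (∑ i ∈ Finset.range Bx, a i k * 2 ^ i) / 2 ^ Bx)
    (hy : ∀ k < N, y k = (∑ j ∈ Finset.range By, c j k * 2 ^ j) / 2 ^ By)
    (σ : ℝ → ℝ) (hσ : ∀ t, σ t = (1 - t) / 2)
    (xor : ℝ → ℝ → ℝ) (hxor : ∀ u v, xor u v = u + v - 2 * u * v)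
    (T : ℝ)
    (hT : T = ∑ k ∈ Finset.range N, ∑ i ∈ Finset.range Bx,
      ∑ j ∈ Finset.range By, xor (σ (a i k)) (σ (c j k)) * 2 ^ (i + j)) :
    ∑ k ∈ Finset.range N, x k * y k =
      (1 / 2 ^ (Bx + By)) * (N * (2 ^ Bx - 1) * (2 ^ By - 1) - 2 * T) := by
  have key : ∀ u v : ℝ, xor (σ u) (σ v) = (1 - u * v) / 2 := by
    intro u v; rw [hxor, hσ, hσ]; ring
  have hgeo : ∀ B : ℕ, (∑ i ∈ Finset.range B, (2:ℝ) ^ i) = 2 ^ B - 1 := by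
    intro B
    induction B with
    | zero => simp
    | succ n ih => rw [Finset.sum_range_succ, ih]; ring
  have hpow : ((2:ℝ) ^ (Bx + By)) ≠ 0 := by positivity
  have hmain : ∀ k ∈ Finset.range N,
      x k * y k = (1 / 2 ^ (Bx + By)) * ((2 ^ Bx - 1) * (2 ^ By - 1)
        - 2 * ∑ i ∈ Finset.range Bx, ∑ j ∈ Finset.range By,
            xor (σ (a i k)) (σ (c j k)) * 2 ^ (i + j)) := by
    intro k hk
    rw [Finset.mem_range] at hk
    rw [hx k hk, hy k hk]
    have h2 : (∑ i ∈ Finset.range Bx, ∑ j ∈ Finset.range By,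
        xor (σ (a i k)) (σ (c j k)) * 2 ^ (i + j))
        = ((2 ^ Bx - 1) * (2 ^ By - 1)
          - (∑ i ∈ Finset.range Bx, a i k * 2 ^ i) *
            (∑ j ∈ Finset.range By, c j k * 2 ^ j)) / 2 := by
      rw [← hgeo Bx, ← hgeo By, Finset.sum_mul_sum, Finset.sum_mul_sum,
        ← Finset.sum_sub_distrib, Finset.sum_div]
      refine Finset.sum_congr rfl fun i _ => ?_
      rw [← Finset.sum_sub_distrib, Finset.sum_div]
      refine Finset.sum_congr rfl fun j _ => ?_
      rw [key, pow_add]; ring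
    rw [h2, pow_add]
    have hbx : ((2:ℝ) ^ Bx) ≠ 0 := by positivity
    have hby : ((2:ℝ) ^ By) ≠ 0 := by positivity
    field_simp
    ring
  rw [Finset.sum_congr rfl hmain, ← Finset.mul_sum, Finset.sum_sub_distrib,
    Finset.sum_const, Finset.card_range, ← Finset.mul_sum, hT, nsmul_eq_mul]
  ring
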